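/- Let v₁,…,vₙ be the vertices at height one of a convex polygon P in ℝ³ (counterclockwise), r > 0, and let b ∈ rP with b in the relative interior of the cone over P. On the fiber π⁻¹(b) = {φ ∈ ℝ≥0ⁿ : Σᵢ φⁱvᵢ = b}, the cubic F̂_P(φ) = Σ_{i<j<k} det(vᵢ,vⱼ,v_k)φⁱφʲφᵏ restricts to the quadratic Q(φ) = Σ_{j<k} det(b,vⱼ,v_k)φʲφᵏ. -/
import Mathlib

/-- The determinant of the 3×3 matrix with columns `a`, `b`, `c`. -/
noncomputable def det3 (a b c : Fin 3 → ℝ) : ℝ :=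
  Matrix.det (Matrix.of fun i j => ![a, b, c] j i)

lemma det3_formula (a b c : Fin 3 → ℝ) :
    det3 a b c = a 0 * (b 1 * c 2 - b 2 * c 1) - a 1 * (b 0 * c 2 - b 2 * c 0)
      + a 2 * (b 0 * c 1 - b 1 * c 0) := by
  simp [det3, Matrix.det_fin_three]
  ring

lemma det3_swap12 (a b c : Fin 3 → ℝ) : det3 b a c = -det3 a b c := by
  rw [det3_formula, det3_formula]; ring

lemma det3_cyclic (a b c : Fin 3 → ℝ) : det3 c a b = det3 a b c := by
  rw [det3_formula, det3_formula]; ring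

lemma det3_self12 (a c : Fin 3 → ℝ) : det3 a a c = 0 := by
  rw [det3_formula]; ring

lemma det3_self13 (a b : Fin 3 → ℝ) : det3 a b a = 0 := by
  rw [det3_formula]; ring

lemma det3_sum {n : ℕ} (φ : Fin n → ℝ) (v : Fin n → (Fin 3 → ℝ)) (w u : Fin 3 → ℝ) :
    det3 (∑ i, φ i • v i) w u = ∑ i, φ i * det3 (v i) w u := by
  have h : ∀ m : Fin 3, (∑ i, φ i • v i) m = ∑ i, φ i * v i m := fun m => by
    simp [Finset.sum_apply]
  rw [det3_formula, h, h, h, Finset.sum_mul, Finset.sum_mul, Finset.sum_mul,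
    ← Finset.sum_sub_distrib, ← Finset.sum_add_distrib]
  refine Finset.sum_congr rfl fun i _ => ?_
  rw [det3_formula]; ring

lemma sum_Ioi_eq {n : ℕ} (j : Fin n) (f : Fin n → ℝ) :
    ∑ k ∈ Finset.Ioi j, f k = ∑ k, if j < k then f k else 0 := by
  have h := Finset.sum_ite_mem Finset.univ (Finset.Ioi j) f
  rw [Finset.univ_inter] at h
  rw [← h]
  exact Finset.sum_congr rfl fun k _ => by simp [Finset.mem_Ioi]

/-- Key algebraic rearrangement for an alternating tensor. -/
lemma key_rearrange {n : ℕ} (D : Fin n → Fin n → Fin n → ℝ)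
    (hswap : ∀ i j k, D j i k = -D i j k)
    (hcyc : ∀ i j k, D k i j = D i j k)
    (h12 : ∀ i k, D i i k = 0) (h13 : ∀ i k, D i k i = 0) :
    (∑ j, ∑ k ∈ Finset.Ioi j, ∑ i, D i j k)
      = ∑ i, ∑ j ∈ Finset.Ioi i, ∑ k ∈ Finset.Ioi j, D i j k := by
  classical
  have hL : (∑ i, ∑ j ∈ Finset.Ioi i, ∑ k ∈ Finset.Ioi j, D i j k)
      = ∑ p : Fin n × Fin n × Fin n,
          if p.1 < p.2.1 ∧ p.2.1 < p.2.2 then D p.1 p.2.1 p.2.2 else 0 := by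
    rw [Fintype.sum_prod_type]
    refine Finset.sum_congr rfl fun i _ => ?_
    rw [sum_Ioi_eq]
    rw [Fintype.sum_prod_type]
    refine Finset.sum_congr rfl fun j _ => ?_
    by_cases h : i < j
    · simp only [if_pos h, sum_Ioi_eq]
      exact Finset.sum_congr rfl fun k _ => by rw [ite_and, if_pos h]
    · simp only [if_neg h]
      rw [eq_comm, Finset.sum_eq_zero]
      intro k _
      rw [ite_and, if_neg h]
  have hR : (∑ j, ∑ k ∈ Finset.Ioi j, ∑ i, D i j k)
      = ∑ p : Fin n × Fin n × Fin n,
          if p.2.1 < p.2.2 then D p.1 p.2.1 p.2.2 else 0 := by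
    rw [show (∑ p : Fin n × Fin n × Fin n,
          if p.2.1 < p.2.2 then D p.1 p.2.1 p.2.2 else 0)
        = ∑ i, ∑ q : Fin n × Fin n, if q.1 < q.2 then D i q.1 q.2 else 0 from
      Fintype.sum_prod_type _]
    rw [Finset.sum_comm]
    rw [Fintype.sum_prod_type]
    refine Finset.sum_congr rfl fun j _ => ?_
    rw [sum_Ioi_eq]
    refine Finset.sum_congr rfl fun k _ => ?_
    by_cases h : j < k
    · simp only [if_pos h]
    · simp only [if_neg h, Finset.sum_const_zero]
  rw [hL, hR]
  have hsplit : ∀ p : Fin n × Fin n × Fin n,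
      (if p.2.1 < p.2.2 then D p.1 p.2.1 p.2.2 else 0)
        = (if p.1 < p.2.1 ∧ p.2.1 < p.2.2 then D p.1 p.2.1 p.2.2 else 0)
          + (if p.2.1 < p.1 ∧ p.1 < p.2.2 then D p.1 p.2.1 p.2.2 else 0)
          + (if p.2.1 < p.2.2 ∧ p.2.2 < p.1 then D p.1 p.2.1 p.2.2 else 0) := by
    rintro ⟨i, j, k⟩
    simp only
    by_cases hjk : j < k
    · rcases lt_trichotomy i j with h | h | h
      · have h1 : ¬ (j < i ∧ i < k) := fun ⟨a, _⟩ => absurd h (not_lt.mpr a.le)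
        have h2 : ¬ (j < k ∧ k < i) := fun ⟨_, a⟩ =>
          absurd (h.trans (hjk.trans a)) (lt_irrefl i)
        have h3 : ¬ k < i := not_lt.mpr (h.trans hjk).le
        simp [hjk, h, h1, h2, h3]
      · subst h
        have h1 : ¬ (i < i) := lt_irrefl i
        have h2 : ¬ (i < k ∧ k < i) := fun ⟨a, c⟩ => absurd (a.trans c) (lt_irrefl i)
        simp [hjk, h1, h2, h12]
      · rcases lt_trichotomy i k with h' | h' | h'
        · have h1 : ¬ i < j := not_lt.mpr h.le
          have h2 : ¬ (j < k ∧ k < i) := fun ⟨_, a⟩ => absurd (a.trans h') (lt_irrefl k)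
          have h3 : ¬ k < i := not_lt.mpr h'.le
          simp [hjk, h, h', h1, h2, h3]
        · subst h'
          have h1 : ¬ i < j := not_lt.mpr h.le
          have h2 : ¬ i < i := lt_irrefl i
          simp [hjk, h1, h2, h13]
        · have h1 : ¬ i < j := not_lt.mpr h.le
          have h2 : ¬ i < k := not_lt.mpr h'.le
          simp [hjk, h, h', h1, h2]
    · have h1 : ¬ (j < i ∧ i < k) := fun ⟨a, c⟩ => absurd (a.trans c) hjk
      simp [hjk, h1]
  rw [Finset.sum_congr rfl fun p _ => hsplit p]
  rw [Finset.sum_add_distrib, Finset.sum_add_distrib]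
  have eswap : Equiv.Perm (Fin n × Fin n × Fin n) :=
    ⟨fun p => (p.2.1, p.1, p.2.2), fun p => (p.2.1, p.1, p.2.2),
      fun p => rfl, fun p => rfl⟩
  have hB : (∑ p : Fin n × Fin n × Fin n,
        if p.2.1 < p.1 ∧ p.1 < p.2.2 then D p.1 p.2.1 p.2.2 else 0)
      = -∑ p : Fin n × Fin n × Fin n,
          if p.1 < p.2.1 ∧ p.2.1 < p.2.2 then D p.1 p.2.1 p.2.2 else 0 := by
    rw [← Equiv.sum_comp
      (⟨fun p => (p.2.1, p.1, p.2.2), fun p => (p.2.1, p.1, p.2.2),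
        fun p => rfl, fun p => rfl⟩ : Equiv.Perm (Fin n × Fin n × Fin n))
      (fun p => if p.2.1 < p.1 ∧ p.1 < p.2.2 then D p.1 p.2.1 p.2.2 else 0),
      ← Finset.sum_neg_distrib]
    refine Finset.sum_congr rfl fun p _ => ?_
    obtain ⟨i, j, k⟩ := p
    simp only [Equiv.coe_fn_mk]
    by_cases h : i < j ∧ j < k
    · rw [if_pos h, if_pos h, hswap]
    · rw [if_neg h, if_neg h, neg_zero]
  have hC : (∑ p : Fin n × Fin n × Fin n,
        if p.2.1 < p.2.2 ∧ p.2.2 < p.1 then D p.1 p.2.1 p.2.2 else 0)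
      = ∑ p : Fin n × Fin n × Fin n,
          if p.1 < p.2.1 ∧ p.2.1 < p.2.2 then D p.1 p.2.1 p.2.2 else 0 := by
    rw [← Equiv.sum_comp
      (⟨fun p => (p.2.2, p.1, p.2.1), fun p => (p.2.1, p.2.2, p.1),
        fun p => rfl, fun p => rfl⟩ : Equiv.Perm (Fin n × Fin n × Fin n))
      (fun p => if p.2.1 < p.2.2 ∧ p.2.2 < p.1 then D p.1 p.2.1 p.2.2 else 0)]
    refine Finset.sum_congr rfl fun p _ => ?_
    obtain ⟨i, j, k⟩ := p
    simp only [Equiv.coe_fn_mk]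
    by_cases h : i < j ∧ j < k
    · rw [if_pos h, if_pos h, hcyc]
    · rw [if_neg h, if_neg h]
  rw [hB, hC]
  ring

/-- On the fiber `π⁻¹(b) = {φ ∈ ℝ≥0ⁿ : Σᵢ φⁱvᵢ = b}` over a
point `b` of the relative interior of the cone over the polygon (at height
`r`), the cubic `F̂_P(φ) = Σ_{i<j<k} det(vᵢ,vⱼ,v_k)φⁱφʲφᵏ` restricts to the
quadratic `Q(φ) = Σ_{j<k} det(b,vⱼ,v_k)φʲφᵏ`. -/
theorem cubic_restricts_to_quadratic_on_fiber (n : ℕ) (hn : 3 ≤ n)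
    (v : Fin n → (Fin 3 → ℝ)) (hheight : ∀ i, v i 2 = 1)
    (hccw : ∀ i j k : Fin n, i < j → j < k → 0 < det3 (v i) (v j) (v k))
    (r : ℝ) (hr : 0 < r) (b : Fin 3 → ℝ) (hb : b 2 = r)
    (hbint : ∃ ψ : Fin n → ℝ, (∀ i, 0 < ψ i) ∧ ∑ i, ψ i • v i = b) :
    ∀ φ : Fin n → ℝ, (∀ i, 0 ≤ φ i) → ∑ i, φ i • v i = b →
      (∑ i, ∑ j ∈ Finset.Ioi i, ∑ k ∈ Finset.Ioi j,
          det3 (v i) (v j) (v k) * φ i * φ j * φ k)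
        = ∑ j, ∑ k ∈ Finset.Ioi j, det3 b (v j) (v k) * φ j * φ k := by
  intro φ _ hsum
  have hlin : ∀ j k : Fin n, det3 b (v j) (v k) * φ j * φ k
      = ∑ i, det3 (v i) (v j) (v k) * φ i * φ j * φ k := by
    intro j k
    rw [← hsum, det3_sum, Finset.sum_mul, Finset.sum_mul]
    exact Finset.sum_congr rfl fun i _ => by ring
  rw [show (∑ j, ∑ k ∈ Finset.Ioi j, det3 b (v j) (v k) * φ j * φ k)
      = ∑ j, ∑ k ∈ Finset.Ioi j, ∑ i, det3 (v i) (v j) (v k) * φ i * φ j * φ k from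
    Finset.sum_congr rfl fun j _ => Finset.sum_congr rfl fun k _ => hlin j k]
  exact (key_rearrange (fun i j k => det3 (v i) (v j) (v k) * φ i * φ j * φ k)
    (fun i j k => by
      show det3 (v j) (v i) (v k) * φ j * φ i * φ k
          = -(det3 (v i) (v j) (v k) * φ i * φ j * φ k)
      rw [det3_swap12]; ring)
    (fun i j k => by
      show det3 (v k) (v i) (v j) * φ k * φ i * φ j
          = det3 (v i) (v j) (v k) * φ i * φ j * φ k
      rw [det3_cyclic]; ring)
    (fun i k => by
      show det3 (v i) (v i) (v k) * φ i * φ i * φ k = 0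
      rw [det3_self12]; ring)
    (fun i k => by
      show det3 (v i) (v k) (v i) * φ i * φ k * φ i = 0
      rw [det3_self13]; ring)).symm
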